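/- arXiv:2308.06091 — 2 statements merged into one kernel-verified Lean document; each statement's English description precedes it below -/
import Mathlib

section
/- Let a ∈ ℝ and b : Fin n → ℝ be finitely many real numbers, with M = max over j of b j, and suppose M > a. Then lim_{τ → 0⁺} τ · log(1 + ∑_{j} exp((b j - a)/τ)) = M - a. -/
open Filter Topology

theorem stmt_2 (n : ℕ) [NeZero n] (a : ℝ) (b : Fin n → ℝ)
    (hM : a < Finset.univ.sup' Finset.univ_nonempty b) :
    Tendsto (fun τ : ℝ => τ * Real.log (1 + ∑ j, Real.exp ((b j - a) / τ)))
      (nhdsWithin 0 (Set.Ioi 0))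
      (nhds (Finset.univ.sup' Finset.univ_nonempty b - a)) := by
  set M := Finset.univ.sup' Finset.univ_nonempty b with hMdef
  obtain ⟨j0, -, hj0⟩ := Finset.exists_mem_eq_sup' Finset.univ_nonempty b
  set S : ℝ → ℝ := fun τ => Real.exp (-(M - a)/τ) + ∑ j, Real.exp ((b j - M)/τ) with hS
  have hS1 : ∀ τ ∈ Set.Ioi (0:ℝ), (1:ℝ) ≤ S τ := by
    intro τ hτ
    have h1 : Real.exp ((b j0 - M)/τ) = 1 := by rw [← hj0]; simp [← hMdef]
    calc (1:ℝ) = Real.exp ((b j0 - M)/τ) := h1.symm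
    _ ≤ ∑ j, Real.exp ((b j - M)/τ) :=
        Finset.single_le_sum (f := fun j => Real.exp ((b j - M)/τ)) (fun j _ => (Real.exp_pos _).le) (Finset.mem_univ j0)
    _ ≤ S τ := le_add_of_nonneg_left (Real.exp_pos _).le
  have hS2 : ∀ τ ∈ Set.Ioi (0:ℝ), S τ ≤ n + 1 := by
    intro τ hτ
    have hτ' : (0:ℝ) < τ := hτ
    have hexp1 : Real.exp (-(M - a)/τ) ≤ 1 := by
      rw [Real.exp_le_one_iff]
      apply div_nonpos_of_nonpos_of_nonneg <;> linarith
    have hsum : ∑ j, Real.exp ((b j - M)/τ) ≤ (n : ℝ) := by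
      calc ∑ j, Real.exp ((b j - M)/τ) ≤ ∑ _j : Fin n, (1:ℝ) := by
            apply Finset.sum_le_sum
            intro j _
            rw [Real.exp_le_one_iff]
            apply div_nonpos_of_nonpos_of_nonneg
            · have : b j ≤ M := Finset.le_sup' b (Finset.mem_univ j)
              linarith
            · linarith
        _ = (n : ℝ) := by simp
    simp only [hS]; linarith
  have key : ∀ τ ∈ Set.Ioi (0:ℝ),
      τ * Real.log (1 + ∑ j, Real.exp ((b j - a) / τ)) = (M - a) + τ * Real.log (S τ) := by
    intro τ hτ
    have hτ' : (0:ℝ) < τ := hτ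
    have hprod : 1 + ∑ j, Real.exp ((b j - a) / τ) = Real.exp ((M - a)/τ) * S τ := by
      simp only [hS]
      rw [mul_add, ← Real.exp_add, Finset.mul_sum]
      have h1 : (M - a)/τ + -(M - a)/τ = 0 := by field_simp; ring
      rw [h1, Real.exp_zero]
      congr 1
      apply Finset.sum_congr rfl
      intro j _
      rw [← Real.exp_add]
      congr 1
      field_simp; ring
    rw [hprod, Real.log_mul (Real.exp_pos _).ne' (by linarith [hS1 τ hτ]),
      Real.log_exp, mul_add, mul_div_cancel₀ _ hτ'.ne']
  have hg : Tendsto (fun τ : ℝ => τ * Real.log (S τ)) (nhdsWithin 0 (Set.Ioi 0)) (nhds 0) := by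
    have hupper : Tendsto (fun τ : ℝ => τ * Real.log (n + 1)) (nhdsWithin 0 (Set.Ioi 0)) (nhds 0) := by
      have := (tendsto_id.mul_const (Real.log (n + 1))).mono_left
        (nhdsWithin_le_nhds : nhdsWithin (0:ℝ) (Set.Ioi 0) ≤ nhds 0)
      simpa using this
    apply tendsto_of_tendsto_of_tendsto_of_le_of_le' tendsto_const_nhds hupper
    · filter_upwards [self_mem_nhdsWithin] with τ hτ
      exact mul_nonneg (le_of_lt hτ) (Real.log_nonneg (hS1 τ hτ))
    · filter_upwards [self_mem_nhdsWithin] with τ hτ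
      exact mul_le_mul_of_nonneg_left
        (Real.log_le_log (by linarith [hS1 τ hτ]) (hS2 τ hτ)) (le_of_lt hτ)
  have := (tendsto_const_nhds.add hg : Tendsto (fun τ : ℝ => (M - a) + τ * Real.log (S τ))
    (nhdsWithin 0 (Set.Ioi 0)) (nhds ((M - a) + 0)))
  rw [add_zero] at this
  apply this.congr'
  filter_upwards [self_mem_nhdsWithin] with τ hτ
  exact (key τ hτ).symm
end

section
/- For n ≥ 1 and reals a, b₁,…,bₙ all bounded in absolute value by B, and τ ≥ max(1, 2B), the SSM loss L(τ) = −log( exp(a/τ)/(exp(a/τ) + ∑_j exp(b_j/τ)) ) satisfies |L(τ) − log(n+1) − ( −a/τ + (1/((n+1)τ))(a + ∑_j b_j) )| ≤ C/τ² for some constant C depending only on n and B. -/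
open Real Finset

lemma mylog_aux {u : ℝ} (h : |u| < 1) : |Real.log (1 + u) - u| ≤ |u| ^ 2 / (1 - |u|) := by
  have h2 := Real.abs_log_sub_add_sum_range_le (x := -u) (by rwa [abs_neg]) 1
  norm_num at h2
  have he : Real.log (1 + u) - u = -u + Real.log (1 + u) := by ring
  rw [he]
  convert h2 using 2
  norm_num

theorem stmt_16 (n : ℕ) (hn : 1 ≤ n) (B : ℝ) :
    ∃ C : ℝ, ∀ (a : ℝ) (b : Fin n → ℝ), |a| ≤ B → (∀ j, |b j| ≤ B) →
      ∀ τ : ℝ, max 1 (2 * B) ≤ τ →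
        |(-Real.log (Real.exp (a / τ) / (Real.exp (a / τ) + ∑ j, Real.exp (b j / τ))))
            - Real.log (n + 1)
            - (-(a / τ) + (1 / (((n : ℝ) + 1) * τ)) * (a + ∑ j, b j))|
          ≤ C / τ ^ 2 := by
  refine ⟨10 * B ^ 2, fun a b ha hb τ hτ => ?_⟩
  have hτ1 : (1 : ℝ) ≤ τ := le_trans (le_max_left _ _) hτ
  have hτB : 2 * B ≤ τ := le_trans (le_max_right _ _) hτ
  have hτ0 : 0 < τ := lt_of_lt_of_le one_pos hτ1
  have hB0 : 0 ≤ B := le_trans (abs_nonneg a) ha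
  have hBτ : B / τ ≤ 1 / 2 := by
    rw [div_le_div_iff₀ hτ0 two_pos]; linarith
  have hxb : |a / τ| ≤ B / τ := by
    rw [abs_div, abs_of_pos hτ0]; gcongr
  have hyb : ∀ j, |b j / τ| ≤ B / τ := fun j => by
    rw [abs_div, abs_of_pos hτ0]; gcongr; exact hb j
  have hexp : ∀ t : ℝ, |t| ≤ B / τ → |Real.exp t - 1 - t| ≤ B ^ 2 / τ ^ 2 := by
    intro t ht
    have ht1 : |t| ≤ 1 := le_trans ht (by linarith)
    calc |Real.exp t - 1 - t| ≤ t ^ 2 := Real.abs_exp_sub_one_sub_id_le ht1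
      _ = |t| ^ 2 := (sq_abs t).symm
      _ ≤ (B / τ) ^ 2 := pow_le_pow_left₀ (abs_nonneg t) ht 2
      _ = B ^ 2 / τ ^ 2 := by rw [div_pow]
  set N : ℝ := (n : ℝ) + 1 with hN
  have hN0 : (0 : ℝ) < N := by positivity
  set S : ℝ := Real.exp (a / τ) + ∑ j, Real.exp (b j / τ) with hS
  have hS0 : 0 < S := by positivity
  clear_value N S
  set s : ℝ := a / τ + ∑ j, b j / τ with hs
  clear_value s
  have hR : |S - N - s| ≤ N * (B ^ 2 / τ ^ 2) := by
    have heq : S - N - s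
        = (Real.exp (a / τ) - 1 - a / τ) + ∑ j, (Real.exp (b j / τ) - 1 - b j / τ) := by
      rw [hS, hN, hs]
      have h' : ∑ j, (Real.exp (b j / τ) - 1 - b j / τ)
          = (∑ j, Real.exp (b j / τ)) - n - ∑ j, b j / τ := by
        rw [Finset.sum_sub_distrib, Finset.sum_sub_distrib, Finset.sum_const,
          Finset.card_univ, Fintype.card_fin]; ring
      rw [h']; ring
    rw [heq]
    calc |(Real.exp (a / τ) - 1 - a / τ) + ∑ j, (Real.exp (b j / τ) - 1 - b j / τ)|
        ≤ |Real.exp (a / τ) - 1 - a / τ| + |∑ j, (Real.exp (b j / τ) - 1 - b j / τ)| :=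
          abs_add_le _ _
      _ ≤ B ^ 2 / τ ^ 2 + ∑ j, |Real.exp (b j / τ) - 1 - b j / τ| :=
          add_le_add (hexp _ hxb) (Finset.abs_sum_le_sum_abs _ _)
      _ ≤ B ^ 2 / τ ^ 2 + ∑ _j : Fin n, B ^ 2 / τ ^ 2 := by
          gcongr with j _; exact hexp _ (hyb j)
      _ = N * (B ^ 2 / τ ^ 2) := by
          rw [Finset.sum_const, Finset.card_univ, Fintype.card_fin, hN]; ring
  have hsb : |s| ≤ N * (B / τ) := by
    rw [hs]
    calc |a / τ + ∑ j, b j / τ| ≤ |a / τ| + |∑ j, b j / τ| := abs_add_le _ _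
      _ ≤ B / τ + ∑ j, |b j / τ| :=
          add_le_add hxb (Finset.abs_sum_le_sum_abs _ _)
      _ ≤ B / τ + ∑ _j : Fin n, B / τ := by gcongr with j _; exact hyb j
      _ = N * (B / τ) := by
          rw [Finset.sum_const, Finset.card_univ, Fintype.card_fin, hN]; ring
  set u : ℝ := (S - N) / N with hu
  clear_value u
  have huval : |u| ≤ B / τ + B ^ 2 / τ ^ 2 := by
    have hSN : |S - N| ≤ N * (B / τ) + N * (B ^ 2 / τ ^ 2) := by
      calc |S - N| = |(S - N - s) + s| := by congr 1; ring
        _ ≤ |S - N - s| + |s| := abs_add_le _ _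
        _ ≤ N * (B ^ 2 / τ ^ 2) + N * (B / τ) := add_le_add hR hsb
        _ = N * (B / τ) + N * (B ^ 2 / τ ^ 2) := by ring
    rw [hu, abs_div, abs_of_pos hN0, div_le_iff₀ hN0]
    calc |S - N| ≤ N * (B / τ) + N * (B ^ 2 / τ ^ 2) := hSN
      _ = (B / τ + B ^ 2 / τ ^ 2) * N := by ring
  have hB2τ : B ^ 2 / τ ^ 2 ≤ (1 / 2) * (B / τ) := by
    have h' : B ^ 2 / τ ^ 2 = (B / τ) * (B / τ) := by field_simp
    rw [h']
    have h1 : 0 ≤ B / τ := by positivity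
    nlinarith
  have hu32 : |u| ≤ (3 / 2) * (B / τ) := by linarith
  have hu34 : |u| ≤ 3 / 4 := by
    have := mul_le_mul_of_nonneg_left hBτ (by norm_num : (0:ℝ) ≤ 3 / 2)
    linarith
  have hu1 : |u| < 1 := lt_of_le_of_lt hu34 (by norm_num)
  have hlog : |Real.log (1 + u) - u| ≤ |u| ^ 2 / (1 - |u|) := mylog_aux hu1
  have h1u : (0 : ℝ) < 1 + u := by
    have := abs_le.mp hu34; linarith [this.1]
  have hgoal : (-Real.log (Real.exp (a / τ) / S)) - Real.log N
      - (-(a / τ) + (1 / (N * τ)) * (a + ∑ j, b j))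
      = (Real.log (1 + u) - u) + (S - N - s) / N := by
    have hSe : S = N * (1 + u) := by rw [hu]; field_simp; ring
    have hSlog : Real.log S = Real.log N + Real.log (1 + u) := by
      rw [hSe, Real.log_mul (ne_of_gt hN0) (ne_of_gt h1u)]
    have hterm : (1 / (N * τ)) * (a + ∑ j, b j) = s / N := by
      rw [hs, ← Finset.sum_div]
      field_simp
    rw [Real.log_div (Real.exp_ne_zero _) (ne_of_gt hS0), Real.log_exp, hSlog, hterm, hu]
    field_simp
    ring
  rw [hgoal]
  have h1 : |(Real.log (1 + u) - u) + (S - N - s) / N|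
      ≤ |u| ^ 2 / (1 - |u|) + |S - N - s| / N := by
    calc |(Real.log (1 + u) - u) + (S - N - s) / N|
        ≤ |Real.log (1 + u) - u| + |(S - N - s) / N| := abs_add_le _ _
      _ ≤ |u| ^ 2 / (1 - |u|) + |S - N - s| / N := by
          rw [abs_div, abs_of_pos hN0]; exact add_le_add hlog le_rfl
  refine le_trans h1 ?_
  have h2 : |u| ^ 2 / (1 - |u|) ≤ 9 * (B ^ 2 / τ ^ 2) := by
    have hd : (1 : ℝ) / 4 ≤ 1 - |u| := by linarith
    have hsq : |u| ^ 2 ≤ (9 / 4) * (B ^ 2 / τ ^ 2) := by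
      have := pow_le_pow_left₀ (abs_nonneg u) hu32 2
      calc |u| ^ 2 ≤ ((3 / 2) * (B / τ)) ^ 2 := this
        _ = (9 / 4) * (B ^ 2 / τ ^ 2) := by field_simp; ring
    calc |u| ^ 2 / (1 - |u|) ≤ |u| ^ 2 / (1 / 4) := by
            gcongr
      _ = 4 * |u| ^ 2 := by ring
      _ ≤ 4 * ((9 / 4) * (B ^ 2 / τ ^ 2)) := by linarith
      _ = 9 * (B ^ 2 / τ ^ 2) := by ring
  have h3 : |S - N - s| / N ≤ B ^ 2 / τ ^ 2 := by
    rw [div_le_iff₀ hN0]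
    calc |S - N - s| ≤ N * (B ^ 2 / τ ^ 2) := hR
      _ = B ^ 2 / τ ^ 2 * N := by ring
  calc |u| ^ 2 / (1 - |u|) + |S - N - s| / N
      ≤ 9 * (B ^ 2 / τ ^ 2) + B ^ 2 / τ ^ 2 := add_le_add h2 h3
    _ = 10 * B ^ 2 / τ ^ 2 := by ring
end
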